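/- The homomorphism φ induces an isomorphism of localizations A_𝔪 → C_𝔫; that is, φ satisfies φ^{−1}(𝔫) = 𝔪 and the induced ring homomorphism from the localization of A at the maximal ideal 𝔪 to the localization of C at the maximal ideal 𝔫 is bijective. -/

import Mathlib

/-!
Setup: `A = ℂ[x_i, y_i : i ∈ ℕ]` is the polynomial ring in countably many pairs
of variables (`x_i = X (Sum.inl i)`, `y_i = X (Sum.inr i)`).
`P = ℂ[t_i, u_i : i ∈ ℕ]` and `C' = ℂ[t_i^{±1}, u_i]` is the localization of `P`
at the multiplicative set generated by the `t_i`.  `phi : A → C'` is the unique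
ℂ-algebra homomorphism with `phi(x_i) = t_i` and `phi(y_i) = t_i⁻¹ + u_i`.
`mIdeal` is the maximal ideal of `A` generated by the `x_i − 1` and `y_i − 1`,
and `nIdeal` is the maximal ideal of `C'` generated by the `t_i − 1` and `u_i`.
(The statement presupposes that these two ideals are maximal, hence prime; this
is recorded via the instance hypotheses.)
-/

noncomputable section
set_option maxHeartbeats 1000000
set_option synthInstance.maxHeartbeats 400000

open MvPolynomial

/-- `A = ℂ[x_i, y_i : i ≥ 1]`. -/
abbrev A : Type := MvPolynomial (ℕ ⊕ ℕ) ℂ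

/-- `P = ℂ[t_i, u_i : i ≥ 1]` (`t_i = X (Sum.inl i)`, `u_i = X (Sum.inr i)`). -/
abbrev P : Type := MvPolynomial (ℕ ⊕ ℕ) ℂ

/-- The multiplicative set generated by the `t_i`. -/
def T : Submonoid P :=
  Submonoid.closure (Set.range fun i : ℕ => (X (Sum.inl i) : P))

/-- `C' = ℂ[t_i^{±1}, u_i : i ≥ 1]`, the localization of `P` at the `t_i`. -/
abbrev C' : Type := Localization T

/-- The inverse `t_i⁻¹` in `C'`. -/
def tInv (i : ℕ) : C' :=
  Localization.mk 1 ⟨X (Sum.inl i), Submonoid.subset_closure (Set.mem_range_self i)⟩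

/-- `phi : A → C'`, the unique ℂ-algebra homomorphism with `phi(x_i) = t_i`
and `phi(y_i) = t_i⁻¹ + u_i`. -/
def phi : A →+* C' :=
  eval₂Hom ((algebraMap P C').comp (MvPolynomial.C)) fun j =>
    match j with
    | Sum.inl i => algebraMap P C' (X (Sum.inl i))
    | Sum.inr i => tInv i + algebraMap P C' (X (Sum.inr i))

/-- The maximal ideal `𝔪 = (x_i − 1, y_i − 1 : i ≥ 1)` of `A`. -/
def mIdeal : Ideal A := Ideal.span (Set.range fun j : ℕ ⊕ ℕ => (X j : A) - 1)

/-- The maximal ideal `𝔫 = (t_i − 1, u_i : i ≥ 1)` of `C'`. -/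
def nIdeal : Ideal C' :=
  Ideal.span ((Set.range fun i : ℕ => algebraMap P C' (X (Sum.inl i)) - 1) ∪
    (Set.range fun i : ℕ => algebraMap P C' (X (Sum.inr i))))

-- auxiliary
theorem mv_sub_C_eval_mem_span {σ : Type*} (f : σ → ℂ) (p : MvPolynomial σ ℂ) :
    p - C (eval f p) ∈
      Ideal.span (Set.range fun i => (X i : MvPolynomial σ ℂ) - C (f i)) := by
  induction p using MvPolynomial.induction_on with
  | C c => simp
  | add p q hp hq =>
      have key : (p + q) - C (eval f (p + q)) =
          (p - C (eval f p)) + (q - C (eval f q)) := by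
        rw [map_add, map_add]; ring
      rw [key]; exact add_mem hp hq
  | mul_X p i hp =>
      have key : p * X i - C (eval f (p * X i)) =
          p * (X i - C (f i)) + (p - C (eval f p)) * C (f i) := by
        rw [map_mul, eval_X, map_mul]; ring
      rw [key]
      exact add_mem (Ideal.mul_mem_left _ _ (Ideal.subset_span ⟨i, rfl⟩))
        (Ideal.mul_mem_right _ _ hp)

theorem mv_ker_eval {σ : Type*} (f : σ → ℂ) :
    RingHom.ker (eval f : MvPolynomial σ ℂ →+* ℂ) =
      Ideal.span (Set.range fun i => (X i : MvPolynomial σ ℂ) - C (f i)) := by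
  apply le_antisymm
  · intro p hp
    have h0 : eval f p = 0 := hp
    have := mv_sub_C_eval_mem_span f p
    rwa [h0, map_zero, sub_zero] at this
  · rw [Ideal.span_le]
    rintro _ ⟨i, rfl⟩
    simp [RingHom.mem_ker]

def eA : A →+* ℂ := eval fun _ => 1
def eP : P →+* ℂ := eval (Sum.elim (fun _ => (1 : ℂ)) fun _ => 0)

lemma T_isUnit (y : P) (hy : y ∈ T) : IsUnit (eP y) := by
  induction hy using Submonoid.closure_induction with
  | mem x hx => obtain ⟨i, rfl⟩ := hx; simp [eP]
  | one => simp
  | mul a b _ _ ha hb => rw [map_mul]; exact ha.mul hb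

def eC : C' →+* ℂ := IsLocalization.lift (M := T) (S := C') fun y => T_isUnit y y.2

lemma eC_algebraMap (p : P) : eC (algebraMap P C' p) = eP p :=
  IsLocalization.lift_eq _ _

lemma tInv_mul (i : ℕ) : tInv i * algebraMap P C' (X (Sum.inl i)) = 1 := by
  rw [tInv, Localization.mk_eq_mk']
  have := IsLocalization.mk'_spec C' (1 : P)
    (⟨X (Sum.inl i), Submonoid.subset_closure (Set.mem_range_self i)⟩ : T)
  simpa using this

lemma mIdeal_eq_ker : mIdeal = RingHom.ker eA := by
  rw [eA, mv_ker_eval]; simp only [map_one, mIdeal]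

lemma mem_mIdeal_of_eA_zero {a : A} (h : eA a = 0) : a ∈ mIdeal := by
  rw [mIdeal_eq_ker]; exact h

lemma ker_eP_le : RingHom.ker eP ≤ Ideal.comap (algebraMap P C') nIdeal := by
  rw [eP, mv_ker_eval, Ideal.span_le]
  rintro _ ⟨(i | i), rfl⟩ <;> rw [SetLike.mem_coe, Ideal.mem_comap]
  · refine Ideal.subset_span (Or.inl ⟨i, ?_⟩)
    simp only [Sum.elim_inl, map_sub, C_1, map_one]
  · refine Ideal.subset_span (Or.inr ⟨i, ?_⟩)
    simp only [Sum.elim_inr, C_0, map_zero, sub_zero]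

lemma nIdeal_le_ker : nIdeal ≤ RingHom.ker eC := by
  rw [nIdeal, Ideal.span_le]
  rintro _ (⟨i, rfl⟩ | ⟨i, rfl⟩) <;>
    simp [RingHom.mem_ker, eC_algebraMap, eP]

lemma mem_nIdeal_of_eC_zero {c : C'} (hc : eC c = 0) : c ∈ nIdeal := by
  obtain ⟨⟨p, s⟩, rfl⟩ := IsLocalization.mk'_surjective T c
  dsimp only at hc ⊢
  have hspec := IsLocalization.mk'_spec C' p s
  have h2 : eP p = 0 := by
    have := congrArg eC hspec
    rw [map_mul, hc, zero_mul, eC_algebraMap] at this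
    exact this.symm
  have hp : algebraMap P C' p ∈ nIdeal := ker_eP_le h2
  rw [IsLocalization.mk'_eq_mul_mk'_one]
  exact Ideal.mul_mem_right _ _ hp

lemma phi_C (r : ℂ) : phi (MvPolynomial.C r) = algebraMap P C' (MvPolynomial.C r) := by
  simp [phi]
lemma phi_X_inl (i : ℕ) : phi (X (Sum.inl i)) = algebraMap P C' (X (Sum.inl i)) := by
  simp [phi]
lemma phi_X_inr (i : ℕ) :
    phi (X (Sum.inr i)) = tInv i + algebraMap P C' (X (Sum.inr i)) := by
  simp [phi]

lemma eC_tInv (i : ℕ) : eC (tInv i) = 1 := by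
  have h := congrArg eC (tInv_mul i)
  rw [map_mul, eC_algebraMap, map_one] at h
  simpa [eP] using h

lemma eC_comp_phi : eC.comp phi = eA := by
  apply MvPolynomial.ringHom_ext
  · intro r
    simp [phi_C, eA, eC_algebraMap, eP]
  · rintro (i | i)
    · simp [phi_X_inl, eA, eC_algebraMap, eP]
    · simp [phi_X_inr, eA, eC_algebraMap, eP, eC_tInv]

lemma comap_eq : mIdeal = Ideal.comap phi nIdeal := by
  apply le_antisymm
  · rw [mIdeal, Ideal.span_le]
    rintro _ ⟨(i | i), rfl⟩ <;>
      rw [SetLike.mem_coe, Ideal.mem_comap, map_sub, map_one]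
    · rw [phi_X_inl]
      exact Ideal.subset_span (Or.inl ⟨i, rfl⟩)
    · rw [phi_X_inr]
      have key : tInv i + algebraMap P C' (X (Sum.inr i)) - 1 =
          algebraMap P C' (X (Sum.inr i)) -
            tInv i * (algebraMap P C' (X (Sum.inl i)) - 1) := by
        rw [mul_sub, tInv_mul, mul_one]; ring
      rw [key]
      exact Ideal.sub_mem _ (Ideal.subset_span (Or.inr ⟨i, rfl⟩))
        (Ideal.mul_mem_left _ _ (Ideal.subset_span (Or.inl ⟨i, rfl⟩)))
  · intro a ha
    rw [Ideal.mem_comap] at ha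
    rw [mIdeal_eq_ker, RingHom.mem_ker, ← eC_comp_phi]
    exact nIdeal_le_ker ha

section Loc
variable [hm : mIdeal.IsPrime]

abbrev Am : Type := Localization.AtPrime mIdeal

lemma X_not_mem_mIdeal (j : ℕ ⊕ ℕ) : X j ∉ mIdeal := by
  rw [mIdeal_eq_ker, RingHom.mem_ker]
  simp [eA]

lemma xUnit (i : ℕ) : IsUnit (algebraMap A Am (X (Sum.inl i))) :=
  (IsLocalization.AtPrime.isUnit_to_map_iff Am mIdeal _).mpr (X_not_mem_mIdeal _)

def xInv (i : ℕ) : Am := ↑(xUnit i).unit⁻¹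

lemma xInv_mul (i : ℕ) : xInv i * algebraMap A Am (X (Sum.inl i)) = 1 :=
  (xUnit i).val_inv_mul

def psi0 : P →+* Am :=
  eval₂Hom ((algebraMap A Am).comp MvPolynomial.C)
    (Sum.elim (fun i => algebraMap A Am (X (Sum.inl i)))
      (fun i => algebraMap A Am (X (Sum.inr i)) - xInv i))

lemma psi0_C (r : ℂ) : psi0 (MvPolynomial.C r) = algebraMap A Am (MvPolynomial.C r) := by
  simp [psi0]
lemma psi0_X_inl (i : ℕ) : psi0 (X (Sum.inl i)) = algebraMap A Am (X (Sum.inl i)) := by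
  simp [psi0]
lemma psi0_X_inr (i : ℕ) :
    psi0 (X (Sum.inr i)) = algebraMap A Am (X (Sum.inr i)) - xInv i := by
  simp [psi0]

lemma psi0_T_isUnit (y : P) (hy : y ∈ T) : IsUnit (psi0 y) := by
  induction hy using Submonoid.closure_induction with
  | mem x hx =>
      obtain ⟨i, rfl⟩ := hx
      rw [psi0_X_inl]
      exact xUnit i
  | one => simp
  | mul a b _ _ ha hb => rw [map_mul]; exact ha.mul hb

def psi : C' →+* Am :=
  IsLocalization.lift (M := T) (S := C') fun y => psi0_T_isUnit y y.2

lemma psi_algebraMap (p : P) : psi (algebraMap P C' p) = psi0 p :=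
  IsLocalization.lift_eq _ _

lemma psi_tInv (i : ℕ) : psi (tInv i) = xInv i := by
  have h1 : psi (tInv i) * algebraMap A Am (X (Sum.inl i)) = 1 := by
    have := congrArg psi (tInv_mul i)
    rwa [map_mul, psi_algebraMap, psi0_X_inl, map_one] at this
  calc psi (tInv i)
      = psi (tInv i) * (algebraMap A Am (X (Sum.inl i)) * xInv i) := by
        rw [mul_comm (algebraMap A Am (X (Sum.inl i))), xInv_mul, mul_one]
    _ = psi (tInv i) * algebraMap A Am (X (Sum.inl i)) * xInv i := by rw [mul_assoc]
    _ = xInv i := by rw [h1, one_mul]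

lemma psi_comp_phi : psi.comp phi = algebraMap A Am := by
  apply MvPolynomial.ringHom_ext
  · intro r
    rw [RingHom.comp_apply, phi_C, psi_algebraMap, psi0_C]
  · rintro (i | i)
    · rw [RingHom.comp_apply, phi_X_inl, psi_algebraMap, psi0_X_inl]
    · rw [RingHom.comp_apply, phi_X_inr, map_add, psi_algebraMap, psi0_X_inr, psi_tInv]
      ring

lemma mcompl_isUnit (y : mIdeal.primeCompl) : IsUnit (eA (y : A)) := by
  rw [isUnit_iff_ne_zero]
  intro h0
  exact y.2 (mem_mIdeal_of_eA_zero h0)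

def eAm : Am →+* ℂ :=
  IsLocalization.lift (M := mIdeal.primeCompl) (S := Am) mcompl_isUnit

lemma eAm_algebraMap (a : A) : eAm (algebraMap A Am a) = eA a :=
  IsLocalization.lift_eq _ _

lemma isUnit_of_eAm_ne_zero {z : Am} (hz : eAm z ≠ 0) : IsUnit z := by
  obtain ⟨⟨a, s⟩, rfl⟩ := IsLocalization.mk'_surjective mIdeal.primeCompl z
  dsimp only at hz ⊢
  rw [IsLocalization.AtPrime.isUnit_mk'_iff]
  intro ha
  apply hz
  have hspec := IsLocalization.mk'_spec Am a s
  have h := congrArg eAm hspec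
  rw [map_mul, eAm_algebraMap, eAm_algebraMap] at h
  have ha0 : eA a = 0 := by rw [mIdeal_eq_ker] at ha; exact ha
  have hs : eA (s : A) ≠ 0 := fun h0 => s.2 (mem_mIdeal_of_eA_zero h0)
  rw [ha0] at h
  exact (mul_eq_zero.mp h).resolve_right hs

lemma eAm_xInv (i : ℕ) : eAm (xInv i) = 1 := by
  have := congrArg eAm (xInv_mul i)
  rw [map_mul, eAm_algebraMap, map_one] at this
  have h1 : eA (X (Sum.inl i) : A) = 1 := by simp [eA]
  rwa [h1, mul_one] at this

lemma eAm_comp_psi : eAm.comp psi = eC := by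
  apply IsLocalization.ringHom_ext T
  apply MvPolynomial.ringHom_ext
  · intro r
    rw [RingHom.comp_apply, RingHom.comp_apply, RingHom.comp_apply, psi_algebraMap,
      psi0_C, eAm_algebraMap, eC_algebraMap]
    simp [eA, eP]
  · rintro (i | i) <;>
      rw [RingHom.comp_apply, RingHom.comp_apply, RingHom.comp_apply, psi_algebraMap,
        eC_algebraMap]
    · rw [psi0_X_inl, eAm_algebraMap]
      simp [eA, eP]
    · rw [psi0_X_inr, map_sub, eAm_algebraMap, eAm_xInv]
      simp [eA, eP]

lemma psi_ncompl_isUnit [hn : nIdeal.IsPrime] (y : nIdeal.primeCompl) :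
    IsUnit (psi (y : C')) := by
  apply isUnit_of_eAm_ne_zero
  have h : eAm (psi (y : C')) = eC (y : C') := by
    rw [← eAm_comp_psi]; rfl
  rw [h]
  intro h0
  exact y.2 (mem_nIdeal_of_eC_zero h0)

def Psi [hn : nIdeal.IsPrime] : Localization.AtPrime nIdeal →+* Am :=
  IsLocalization.lift (M := nIdeal.primeCompl) (S := Localization.AtPrime nIdeal)
    psi_ncompl_isUnit

lemma Psi_algebraMap [hn : nIdeal.IsPrime] (c : C') :
    Psi (algebraMap C' (Localization.AtPrime nIdeal) c) = psi c :=
  IsLocalization.lift_eq _ _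

lemma mul_eq_one_unique {M : Type*} [CommMonoid M] {a b c : M}
    (h1 : a * c = 1) (h2 : b * c = 1) : a = b := by
  calc a = a * (b * c) := by rw [h2, mul_one]
    _ = b * (a * c) := by rw [← mul_assoc, mul_comm a b, mul_assoc]
    _ = b := by rw [h1, mul_one]

end Loc

abbrev Cn [hn : nIdeal.IsPrime] : Type := Localization.AtPrime nIdeal

lemma localRingHom_xInv [hm : mIdeal.IsPrime] [hn : nIdeal.IsPrime] (i : ℕ) :
    Localization.localRingHom mIdeal nIdeal phi comap_eq (xInv i) =
      algebraMap C' Cn (tInv i) := by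
  set Φ := Localization.localRingHom mIdeal nIdeal phi comap_eq
  apply mul_eq_one_unique (c := algebraMap C' Cn (algebraMap P C' (X (Sum.inl i))))
  · have h1 : Φ (algebraMap A Am (X (Sum.inl i))) =
        algebraMap C' Cn (algebraMap P C' (X (Sum.inl i))) := by
      rw [Localization.localRingHom_to_map, phi_X_inl]
    rw [← h1, ← map_mul, xInv_mul, map_one]
  · rw [← map_mul, tInv_mul, map_one]


/-- `phi` satisfies `phi⁻¹(𝔫) = 𝔪` and induces an isomorphism
`A_𝔪 → C'_𝔫` on localizations. -/
theorem phi_localization_isomorphism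
    [hm : mIdeal.IsPrime] [hn : nIdeal.IsPrime] :
    ∃ h : mIdeal = Ideal.comap phi nIdeal,
      Function.Bijective (Localization.localRingHom mIdeal nIdeal phi h) := by
  refine ⟨comap_eq, ?_⟩
  set Φ := Localization.localRingHom mIdeal nIdeal phi comap_eq with hΦ
  have hleft : Psi.comp Φ = RingHom.id Am := by
    refine IsLocalization.ringHom_ext mIdeal.primeCompl (RingHom.ext fun a => ?_)
    simp only [RingHom.comp_apply, RingHom.id_apply]
    rw [hΦ, Localization.localRingHom_to_map, Psi_algebraMap]
    exact DFunLike.congr_fun psi_comp_phi a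
  have hright : Φ.comp Psi = RingHom.id Cn := by
    refine IsLocalization.ringHom_ext nIdeal.primeCompl ?_
    refine IsLocalization.ringHom_ext T ?_
    apply MvPolynomial.ringHom_ext
    · intro r
      simp only [RingHom.comp_apply, RingHom.id_apply]
      rw [Psi_algebraMap, psi_algebraMap, psi0_C, hΦ, Localization.localRingHom_to_map,
        phi_C]
    · rintro (i | i) <;> simp only [RingHom.comp_apply, RingHom.id_apply] <;>
        rw [Psi_algebraMap, psi_algebraMap]
      · rw [psi0_X_inl, hΦ, Localization.localRingHom_to_map, phi_X_inl]
      · rw [psi0_X_inr, map_sub, hΦ, Localization.localRingHom_to_map, phi_X_inr,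
          localRingHom_xInv, map_add]
        ring
  refine Function.bijective_iff_has_inverse.mpr ⟨Psi, fun x => ?_, fun x => ?_⟩
  · have := DFunLike.congr_fun hleft x
    simpa using this
  · have := DFunLike.congr_fun hright x
    simpa using this

end
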